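/- The join G + H of two nontrivial graphs G and H is quasi-λ-distance-balanced if and only if both G and H are empty graphs (i.e., G + H is a complete bipartite graph K_{m,n}) with m ≠ n, where m = |V(G)| and n = |V(H)|. -/

import Mathlib

open SimpleGraph Sum

/-- `wSet G u v` is the set of vertices strictly closer to `u` than to `v`. -/
def wSet {V : Type*} (G : SimpleGraph V) (u v : V) : Set V :=
  {x | G.dist x u < G.dist x v}

/-- `G` is quasi-`lam`-distance-balanced. -/
def QuasiDB {V : Type*} (G : SimpleGraph V) (lam : ℚ) : Prop :=
  ∀ u v : V, G.Adj u v →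
    ((wSet G u v).ncard : ℚ) = lam * ((wSet G v u).ncard : ℚ) ∨
    ((wSet G v u).ncard : ℚ) = lam * ((wSet G u v).ncard : ℚ)


/-- The join of graphs `G` and `H`: the disjoint union together with all
edges between the two vertex sets. -/
def graphJoin {α β : Type*} (G : SimpleGraph α) (H : SimpleGraph β) :
    SimpleGraph (α ⊕ β) where
  Adj x y :=
    match x, y with
    | .inl a, .inl b => G.Adj a b
    | .inr a, .inr b => H.Adj a b
    | .inl _, .inr _ => True
    | .inr _, .inl _ => True
  symm := by
    constructor
    intro x y h
    cases x <;> cases y <;> simp_all [SimpleGraph.adj_comm]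
  loopless := by
    constructor
    intro x
    cases x <;> simp

set_option linter.unusedSectionVars false

section Join

variable {α β : Type*} [Fintype α] [Fintype β] (G : SimpleGraph α) (H : SimpleGraph β)

@[simp] lemma join_adj_ll {a b : α} : (graphJoin G H).Adj (inl a) (inl b) ↔ G.Adj a b := Iff.rfl
@[simp] lemma join_adj_rr {a b : β} : (graphJoin G H).Adj (inr a) (inr b) ↔ H.Adj a b := Iff.rfl
@[simp] lemma join_adj_lr {a : α} {b : β} : (graphJoin G H).Adj (inl a) (inr b) ↔ True := Iff.rfl
@[simp] lemma join_adj_rl {a : β} {b : α} : (graphJoin G H).Adj (inr a) (inl b) ↔ True := Iff.rfl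

variable [Nonempty α] [Nonempty β]

lemma join_dist_adj {x y : α ⊕ β} (h : (graphJoin G H).Adj x y) :
    (graphJoin G H).dist x y = 1 := dist_eq_one_iff_adj.mpr h

lemma join_dist_two {x y : α ⊕ β} (hxy : x ≠ y) (h : ¬(graphJoin G H).Adj x y) :
    (graphJoin G H).dist x y = 2 := by
  obtain ⟨w, hw1, hw2⟩ : ∃ w, (graphJoin G H).Adj x w ∧ (graphJoin G H).Adj w y := by
    cases x with
    | inl a => cases y with
      | inl b => exact ⟨inr (Classical.arbitrary β), trivial, trivial⟩
      | inr b => exact absurd trivial h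
    | inr a => cases y with
      | inl b => exact absurd trivial h
      | inr b => exact ⟨inl (Classical.arbitrary α), trivial, trivial⟩
  have hle : (graphJoin G H).dist x y ≤ 2 := by
    have := SimpleGraph.dist_le (Walk.cons hw1 (Walk.cons hw2 Walk.nil))
    simpa using this
  have hr : (graphJoin G H).Reachable x y :=
    ⟨Walk.cons hw1 (Walk.cons hw2 Walk.nil)⟩
  have h0 : (graphJoin G H).dist x y ≠ 0 := fun hz => hxy (hr.dist_eq_zero_iff.mp hz)
  have h1 : (graphJoin G H).dist x y ≠ 1 := fun hz => h (dist_eq_one_iff_adj.mp hz)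
  omega

lemma mem_wSet_iff {u v x : α ⊕ β} (huv : (graphJoin G H).Adj u v) :
    x ∈ wSet (graphJoin G H) u v ↔
      x = u ∨ (x ≠ u ∧ x ≠ v ∧ (graphJoin G H).Adj x u ∧ ¬(graphJoin G H).Adj x v) := by
  have hne : u ≠ v := huv.ne
  simp only [wSet, Set.mem_setOf_eq]
  by_cases hxu : x = u
  · subst hxu
    simp [SimpleGraph.dist_self, join_dist_adj G H huv, hne]
  by_cases hxv : x = v
  · subst hxv
    simp only [SimpleGraph.dist_self]
    rw [join_dist_adj G H huv.symm]
    simp [hxu, hne.symm]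
  rcases em ((graphJoin G H).Adj x u) with h1|h1 <;> rcases em ((graphJoin G H).Adj x v) with h2|h2
  · rw [join_dist_adj G H h1, join_dist_adj G H h2]; simp [h1, h2, hxu, hxv]
  · rw [join_dist_adj G H h1, join_dist_two G H hxv h2]; simp [h1, h2, hxu, hxv]
  · rw [join_dist_two G H hxu h1, join_dist_adj G H h2]; simp [h1, h2, hxu, hxv]
  · rw [join_dist_two G H hxu h1, join_dist_two G H hxv h2]; simp [h1, h2, hxu, hxv]

lemma wSet_nonempty {u v : α ⊕ β} (huv : (graphJoin G H).Adj u v) :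
    1 ≤ (wSet (graphJoin G H) u v).ncard := by
  rw [Nat.one_le_iff_ne_zero, ← Nat.pos_iff_ne_zero, Set.ncard_pos]
  exact ⟨u, (mem_wSet_iff G H huv).mpr (Or.inl rfl)⟩

end Join
lemma arith_contra {p q A A' B lam : ℚ} (hl : 1 < lam)
    (hp : 1 ≤ p) (hq : 1 ≤ q) (hA : 1 ≤ A) (hA' : 1 ≤ A') (hB : 1 ≤ B)
    (f1 : p + A = q + A') (f2 : p ≤ A') (f3 : q ≤ A)
    (r1 : B = lam*A ∨ A = lam*B) (r2 : B = lam*A' ∨ A' = lam*B)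
    (r3 : p = lam*q ∨ q = lam*p) : False := by
  have h0 : (0:ℚ) < lam := by linarith
  have hAA : A = A' ∨ A = lam^2*A' ∨ A' = lam^2*A := by
    rcases r1 with r1|r1 <;> rcases r2 with r2|r2
    · exact Or.inl (mul_left_cancel₀ (ne_of_gt h0) (r1.symm.trans r2))
    · exact Or.inr (Or.inr (by rw [r2, r1]; ring))
    · exact Or.inr (Or.inl (by rw [r1, r2]; ring))
    · exact Or.inl (by rw [r1, r2])
  rcases r3 with r3|r3
  · have hpq : q < p := by nlinarith
    have hAA' : A < A' := by linarith
    rcases hAA with h|h|h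
    · linarith
    · nlinarith [mul_pos (show (0:ℚ) < lam^2 - 1 by nlinarith) (show (0:ℚ) < A' by linarith)]
    · have e2 : q = (lam+1)*A :=
        mul_left_cancel₀ (by linarith : lam - 1 ≠ 0)
          (by linear_combination (-1 : ℚ) * r3 + f1 + h)
      nlinarith
  · have hpq : p < q := by nlinarith
    have hAA' : A' < A := by linarith
    rcases hAA with h|h|h
    · linarith
    · have e2 : p = (lam+1)*A' :=
        mul_left_cancel₀ (by linarith : lam - 1 ≠ 0)
          (by linear_combination (-1 : ℚ) * r3 - f1 + h)
      nlinarith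
    · nlinarith [mul_pos (show (0:ℚ) < lam^2 - 1 by nlinarith) (show (0:ℚ) < A by linarith)]

section Core

variable {α β : Type*} [Fintype α] [Fintype β] (G : SimpleGraph α) (H : SimpleGraph β)
variable [Nonempty α] [Nonempty β]

lemma no_left_edge {lam : ℚ} (hl : 1 < lam)
    (hqdb : QuasiDB (graphJoin G H) lam) {a b : α} (hab : G.Adj a b) : False := by
  obtain ⟨d⟩ := ‹Nonempty β›
  have hJab : (graphJoin G H).Adj (inl a) (inl b) := hab
  have hJad : (graphJoin G H).Adj (inl a) (inr d) := trivial
  have hJbd : (graphJoin G H).Adj (inl b) (inr d) := trivial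
  set Wab := wSet (graphJoin G H) (inl a) (inl b) with hWab
  set Wba := wSet (graphJoin G H) (inl b) (inl a) with hWba
  set Wad := wSet (graphJoin G H) (inl a) (inr d) with hWad
  set Wbd := wSet (graphJoin G H) (inl b) (inr d) with hWbd
  set Wda := wSet (graphJoin G H) (inr d) (inl a) with hWda
  set Wdb := wSet (graphJoin G H) (inr d) (inl b) with hWdb
  have hne : a ≠ b := fun h => G.irrefl (h ▸ hab)
  -- membership simp kit
  have mab : ∀ x, x ∈ Wab ↔ x = Sum.inl a ∨
      (x ≠ Sum.inl a ∧ x ≠ Sum.inl b ∧ (graphJoin G H).Adj x (inl a) ∧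
        ¬(graphJoin G H).Adj x (inl b)) := fun x => mem_wSet_iff G H hJab
  have mba : ∀ x, x ∈ Wba ↔ x = Sum.inl b ∨
      (x ≠ Sum.inl b ∧ x ≠ Sum.inl a ∧ (graphJoin G H).Adj x (inl b) ∧
        ¬(graphJoin G H).Adj x (inl a)) := fun x => mem_wSet_iff G H hJab.symm
  have mad : ∀ x, x ∈ Wad ↔ x = Sum.inl a ∨
      (x ≠ Sum.inl a ∧ x ≠ Sum.inr d ∧ (graphJoin G H).Adj x (inl a) ∧
        ¬(graphJoin G H).Adj x (inr d)) := fun x => mem_wSet_iff G H hJad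
  have mbd : ∀ x, x ∈ Wbd ↔ x = Sum.inl b ∨
      (x ≠ Sum.inl b ∧ x ≠ Sum.inr d ∧ (graphJoin G H).Adj x (inl b) ∧
        ¬(graphJoin G H).Adj x (inr d)) := fun x => mem_wSet_iff G H hJbd
  have mda : ∀ x, x ∈ Wda ↔ x = Sum.inr d ∨
      (x ≠ Sum.inr d ∧ x ≠ Sum.inl a ∧ (graphJoin G H).Adj x (inr d) ∧
        ¬(graphJoin G H).Adj x (inl a)) := fun x => mem_wSet_iff G H hJad.symm
  have mdb : ∀ x, x ∈ Wdb ↔ x = Sum.inr d ∨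
      (x ≠ Sum.inr d ∧ x ≠ Sum.inl b ∧ (graphJoin G H).Adj x (inr d) ∧
        ¬(graphJoin G H).Adj x (inl b)) := fun x => mem_wSet_iff G H hJbd.symm
  -- B = B' : |Wad| = |Wbd|
  have hU0 : insert (Sum.inl b) Wad = insert (Sum.inl a) Wbd := by
    ext x
    simp only [Set.mem_insert_iff, mad, mbd]
    cases x with
    | inl c => simp; tauto
    | inr e => simp
  have n0a : Sum.inl b ∉ Wad := by simp [mad, hne.symm]
  have n0b : Sum.inl a ∉ Wbd := by simp [mbd, hne]
  have f0 : Wad.ncard = Wbd.ncard := by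
    have := congrArg Set.ncard hU0
    rwa [Set.ncard_insert_of_notMem n0a, Set.ncard_insert_of_notMem n0b,
      Nat.add_right_cancel_iff] at this
  -- f1 : |Wab| + |Wda| = |Wba| + |Wdb|
  have hU : insert (Sum.inl b) (Wab ∪ Wda) = insert (Sum.inl a) (Wba ∪ Wdb) := by
    ext x
    simp only [Set.mem_insert_iff, Set.mem_union, mab, mba, mda, mdb]
    cases x with
    | inl c =>
      by_cases h1 : G.Adj c a <;> by_cases h2 : G.Adj c b <;>
        by_cases h3 : c = a <;> by_cases h4 : c = b <;>
          simp [h1, h2, h3, h4, hne, hab, hab.symm] <;> tauto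
    | inr e => simp
  have d1 : Disjoint Wab Wda := by
    rw [Set.disjoint_left]
    intro x hx1 hx2
    rw [mab] at hx1; rw [mda] at hx2
    cases x with
    | inl c => simp [hab.symm] at hx1 hx2 <;> tauto
    | inr e => simp at hx1 hx2 <;> tauto
  have d2 : Disjoint Wba Wdb := by
    rw [Set.disjoint_left]
    intro x hx1 hx2
    rw [mba] at hx1; rw [mdb] at hx2
    cases x with
    | inl c => simp [hab] at hx1 hx2 <;> tauto
    | inr e => simp at hx1 hx2 <;> tauto
  have n1 : Sum.inl b ∉ Wab ∪ Wda := by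
    simp [mab, mda, hab.symm, hne, hne.symm]
  have n2 : Sum.inl a ∉ Wba ∪ Wdb := by
    simp [mba, mdb, hab, hne]
  have f1 : Wab.ncard + Wda.ncard = Wba.ncard + Wdb.ncard := by
    have := congrArg Set.ncard hU
    rwa [Set.ncard_insert_of_notMem n1, Set.ncard_insert_of_notMem n2,
      Set.ncard_union_eq d1, Set.ncard_union_eq d2, Nat.add_right_cancel_iff] at this
  -- f2 : |Wab| ≤ |Wdb|
  have f2 : Wab.ncard ≤ Wdb.ncard := by
    have hsub : insert (Sum.inr d) Wab ⊆ insert (Sum.inl a) Wdb := by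
      intro x hx
      rcases hx with hx | hx
      · subst hx; right; rw [mdb]; simp
      · rw [mab] at hx
        cases x with
        | inl c =>
          rcases hx with hx | hx
          · left; exact hx
          · right; rw [mdb]; simp at hx ⊢; tauto
        | inr e => simp at hx <;> tauto
    have e1 : Sum.inr d ∉ Wab := by simp [mab]
    have e2 : Sum.inl a ∉ Wdb := by simp [mdb, hab]
    have := Set.ncard_le_ncard hsub (Set.toFinite _)
    rwa [Set.ncard_insert_of_notMem e1, Set.ncard_insert_of_notMem e2,
      Nat.add_le_add_iff_right] at this
  -- f3 : |Wba| ≤ |Wda|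
  have f3 : Wba.ncard ≤ Wda.ncard := by
    have hsub : insert (Sum.inr d) Wba ⊆ insert (Sum.inl b) Wda := by
      intro x hx
      rcases hx with hx | hx
      · subst hx; right; rw [mda]; simp
      · rw [mba] at hx
        cases x with
        | inl c =>
          rcases hx with hx | hx
          · left; exact hx
          · right; rw [mda]; simp at hx ⊢; tauto
        | inr e => simp at hx <;> tauto
    have e1 : Sum.inr d ∉ Wba := by simp [mba]
    have e2 : Sum.inl b ∉ Wda := by simp [mda, hab.symm]
    have := Set.ncard_le_ncard hsub (Set.toFinite _)
    rwa [Set.ncard_insert_of_notMem e1, Set.ncard_insert_of_notMem e2,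
      Nat.add_le_add_iff_right] at this
  -- quasiDB relations
  have r3 := hqdb (inl a) (inl b) hJab
  have r1 := hqdb (inl a) (inr d) hJad
  have r2' := hqdb (inl b) (inr d) hJbd
  have r2 : (Wad.ncard : ℚ) = lam * (Wdb.ncard : ℚ) ∨
      (Wdb.ncard : ℚ) = lam * (Wad.ncard : ℚ) := by
    rw [f0]; exact r2'
  exact arith_contra hl
    (by exact_mod_cast wSet_nonempty G H hJab)
    (by exact_mod_cast wSet_nonempty G H hJab.symm)
    (by exact_mod_cast wSet_nonempty G H hJad.symm)
    (by exact_mod_cast wSet_nonempty G H hJbd.symm)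
    (by exact_mod_cast wSet_nonempty G H hJad)
    (by exact_mod_cast congrArg (Nat.cast : ℕ → ℚ) f1)
    (by exact_mod_cast f2) (by exact_mod_cast f3) r1 r2 r3

end Core

section Swap

variable {α β : Type*} [Fintype α] [Fintype β] (G : SimpleGraph α) (H : SimpleGraph β)

lemma sum_swap_inj {γ δ : Type*} : Function.Injective (Sum.swap : γ ⊕ δ → δ ⊕ γ) :=
  fun x y h => by simpa using congrArg Sum.swap h

lemma swap_adj {x y : β ⊕ α} :
    (graphJoin H G).Adj x y ↔ (graphJoin G H).Adj x.swap y.swap := by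
  cases x <;> cases y <;> simp

variable [Nonempty α] [Nonempty β]

lemma join_swap_dist (x y : β ⊕ α) :
    (graphJoin H G).dist x y = (graphJoin G H).dist x.swap y.swap := by
  by_cases hxy : x = y
  · subst hxy; rw [SimpleGraph.dist_self, SimpleGraph.dist_self]
  have hxy' : x.swap ≠ y.swap := fun h => hxy (sum_swap_inj h)
  by_cases hadj : (graphJoin H G).Adj x y
  · rw [join_dist_adj H G hadj, join_dist_adj G H ((swap_adj G H).mp hadj)]
  · rw [join_dist_two H G hxy hadj,
      join_dist_two G H hxy' (fun h => hadj ((swap_adj G H).mpr h))]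

lemma swap_wSet (u v : β ⊕ α) :
    wSet (graphJoin H G) u v = Sum.swap '' (wSet (graphJoin G H) u.swap v.swap) := by
  ext x
  simp only [wSet, Set.mem_setOf_eq, Set.mem_image]
  constructor
  · intro hx
    refine ⟨x.swap, ?_, Sum.swap_swap x⟩
    rw [← join_swap_dist G H x u, ← join_swap_dist G H x v]
    exact hx
  · rintro ⟨y, hy, rfl⟩
    rw [join_swap_dist G H y.swap u, join_swap_dist G H y.swap v]
    simpa only [Sum.swap_swap] using hy

lemma swap_wSet_ncard (u v : β ⊕ α) :
    (wSet (graphJoin H G) u v).ncard = (wSet (graphJoin G H) u.swap v.swap).ncard := by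
  rw [swap_wSet, Set.ncard_image_of_injective _ sum_swap_inj]

lemma quasiDB_swap {lam : ℚ} (h : QuasiDB (graphJoin G H) lam) :
    QuasiDB (graphJoin H G) lam := by
  intro u v huv
  rw [swap_wSet_ncard G H u v, swap_wSet_ncard G H v u]
  exact h u.swap v.swap ((swap_adj G H).mp huv)

end Swap

section Cards

variable {α β : Type*} [Fintype α] [Fintype β] (G : SimpleGraph α) (H : SimpleGraph β)
variable [Nonempty α] [Nonempty β]

lemma card_wSet_lr (hH : H = ⊥) (a : α) (d : β) :
    (wSet (graphJoin G H) (inl a) (inr d)).ncard = Fintype.card β := by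
  have hset : wSet (graphJoin G H) (inl a) (inr d)
      = insert (Sum.inl a) (Sum.inr '' ({d}ᶜ : Set β)) := by
    ext x
    rw [mem_wSet_iff G H (show (graphJoin G H).Adj (inl a) (inr d) from trivial)]
    cases x with
    | inl c => simp
    | inr e => simp [hH, Ne, eq_comm]
  have hnm : Sum.inl a ∉ (Sum.inr '' ({d}ᶜ : Set β) : Set (α ⊕ β)) := by simp
  have hcompl : ({d}ᶜ : Set β).ncard = Fintype.card β - 1 := by
    have h1 := Set.ncard_add_ncard_compl ({d} : Set β)
    rw [Set.ncard_singleton, Nat.card_eq_fintype_card] at h1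
    omega
  have hpos : 1 ≤ Fintype.card β := Fintype.card_pos
  rw [hset, Set.ncard_insert_of_notMem hnm,
    Set.ncard_image_of_injective _ Sum.inr_injective, hcompl]
  omega

lemma card_wSet_rl (hG : G = ⊥) (a : α) (d : β) :
    (wSet (graphJoin G H) (inr d) (inl a)).ncard = Fintype.card α := by
  rw [show (wSet (graphJoin G H) (inr d) (inl a)).ncard
      = (wSet (graphJoin H G) (inl d) (inr a)).ncard from
    (swap_wSet_ncard G H (inl d) (inr a)).symm]
  exact card_wSet_lr H G hG d a

end Cards


/-- The join of two nontrivial graphs is quasi-`lam`-distance-balanced (for some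
`lam > 1`) iff both graphs are empty and their orders differ. -/
theorem stmt7 {α β : Type*} [Fintype α] [Fintype β] [Nontrivial α] [Nontrivial β]
    (G : SimpleGraph α) (H : SimpleGraph β) :
    (∃ lam : ℚ, 1 < lam ∧ QuasiDB (graphJoin G H) lam) ↔
      (G = ⊥ ∧ H = ⊥ ∧ Fintype.card α ≠ Fintype.card β) := by
  constructor
  · rintro ⟨lam, hl, hq⟩
    have hG : G = ⊥ := by
      by_contra h
      obtain ⟨a, b, hab⟩ : ∃ a b, G.Adj a b := by
        by_contra hno
        push_neg at hno
        exact h (by ext a b; simp [hno])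
      exact no_left_edge G H hl hq hab
    have hH : H = ⊥ := by
      by_contra h
      obtain ⟨a, b, hab⟩ : ∃ a b, H.Adj a b := by
        by_contra hno
        push_neg at hno
        exact h (by ext a b; simp [hno])
      exact no_left_edge H G hl (quasiDB_swap G H hq) hab
    refine ⟨hG, hH, ?_⟩
    intro hcard
    obtain ⟨a⟩ := (inferInstance : Nonempty α)
    obtain ⟨d⟩ := (inferInstance : Nonempty β)
    have := hq (inl a) (inr d) trivial
    rw [card_wSet_lr G H hH a d, card_wSet_rl G H hG a d, ← hcard] at this
    have hpos : 0 < (Fintype.card α : ℚ) := by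
      exact_mod_cast Fintype.card_pos
    rcases this with h | h <;> nlinarith
  · rintro ⟨hG, hH, hcard⟩
    set m := Fintype.card α with hm
    set n := Fintype.card β with hn
    have hmpos : 0 < (m : ℚ) := by exact_mod_cast Fintype.card_pos
    have hnpos : 0 < (n : ℚ) := by exact_mod_cast Fintype.card_pos
    refine ⟨if m < n then (n : ℚ) / m else (m : ℚ) / n, ?_, ?_⟩
    · split
      · rw [one_lt_div hmpos]; exact_mod_cast ‹m < n›
      · rw [one_lt_div hnpos]
        exact_mod_cast lt_of_le_of_ne (not_lt.mp ‹¬ m < n›) (Ne.symm hcard)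
    · intro u v huv
      have key : ∀ (a : α) (d : β),
          ((wSet (graphJoin G H) (inl a) (inr d)).ncard : ℚ)
            = (if m < n then (n : ℚ) / m else (m : ℚ) / n)
              * ((wSet (graphJoin G H) (inr d) (inl a)).ncard : ℚ) ∨
          ((wSet (graphJoin G H) (inr d) (inl a)).ncard : ℚ)
            = (if m < n then (n : ℚ) / m else (m : ℚ) / n)
              * ((wSet (graphJoin G H) (inl a) (inr d)).ncard : ℚ) := by
        intro a d
        rw [card_wSet_lr G H hH a d, card_wSet_rl G H hG a d]
        split
        · left; rw [div_mul_cancel₀ _ (ne_of_gt hmpos)]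
        · right; rw [div_mul_cancel₀ _ (ne_of_gt hnpos)]
      cases u with
      | inl a => cases v with
        | inl b => rw [join_adj_ll, hG] at huv; exact huv.elim
        | inr d => exact key a d
      | inr d => cases v with
        | inl a => exact (key a d).symm
        | inr e => rw [join_adj_rr, hH] at huv; exact huv.elim
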